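/- (Lemma 1, angle coverage) Suppose the focused directions satisfy θ_m = θ_t' + (f_c/f_m)(θ_p' + 2p_m) with p_m = p_{m+1} = p and θ_p' + 2p > 0, and the angle-domain 3 dB beam width at frequency f is η_θ^f = 0.88 f_c/(N_t f). Then the coverage condition |θ_{m+1} − θ_m| ≤ η_θ^{f_m} + η_θ^{f_{m+1}} holds if and only if θ_p' + 2p ≤ (0.88/N_t)(f_m + f_{m+1})/(f_{m+1} − f_m), where 0 < f_m < f_{m+1}. In particular, with f_{m+1} − f_m = B/M, the condition reads θ_p' + 2p ≤ (0.88/N_t)(f_m + f_{m+1}) M/B. -/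

import Mathlib

/-- Lemma 1 (angle coverage): with focused directions
`θ(f) = θ_t' + (f_c/f)(θ_p' + 2p)` (same integer `p` on both subcarriers,
`θ_p' + 2p > 0`) and angle-domain 3 dB beamwidth `η_θ^f = 0.88 f_c/(N_t f)`,
the coverage condition `|θ_{m+1} − θ_m| ≤ η_θ^{f_m} + η_θ^{f_{m+1}}` holds
iff `θ_p' + 2p ≤ (0.88/N_t)(f_m + f_{m+1})/(f_{m+1} − f_m)`; and when
`f_{m+1} − f_m = B/M`, iff `θ_p' + 2p ≤ (0.88/N_t)(f_m + f_{m+1}) M/B`. -/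
theorem angle_coverage_condition (fc Nt θt' θp' B M : ℝ) (p : ℤ)
    (hfc : 0 < fc) (hNt : 0 < Nt) (hB : 0 < B) (hM : 0 < M)
    (hpos : 0 < θp' + 2 * p) (fm fm1 : ℝ) (hfm : 0 < fm) (hlt : fm < fm1) :
    (|(θt' + (fc / fm1) * (θp' + 2 * p)) - (θt' + (fc / fm) * (θp' + 2 * p))| ≤
        0.88 * fc / (Nt * fm) + 0.88 * fc / (Nt * fm1) ↔
      θp' + 2 * p ≤ (0.88 / Nt) * (fm + fm1) / (fm1 - fm)) ∧
    (fm1 - fm = B / M →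
      (|(θt' + (fc / fm1) * (θp' + 2 * p)) - (θt' + (fc / fm) * (θp' + 2 * p))| ≤
          0.88 * fc / (Nt * fm) + 0.88 * fc / (Nt * fm1) ↔
        θp' + 2 * p ≤ (0.88 / Nt) * (fm + fm1) * M / B)) := by
  have hfm1 : 0 < fm1 := hfm.trans hlt
  have hd : 0 < fm1 - fm := sub_pos.2 hlt
  have hle : fc / fm1 ≤ fc / fm := by
    apply div_le_div_of_nonneg_left hfc.le hfm hlt.le
  have habs : |(θt' + (fc / fm1) * (θp' + 2 * p)) - (θt' + (fc / fm) * (θp' + 2 * p))| =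
      fc * (θp' + 2 * p) * (fm1 - fm) / (fm * fm1) := by
    rw [abs_of_nonpos (by nlinarith)]
    field_simp
    ring
  have key : (fc * (θp' + 2 * p) * (fm1 - fm) / (fm * fm1) ≤
      0.88 * fc / (Nt * fm) + 0.88 * fc / (Nt * fm1)) ↔
      θp' + 2 * p ≤ (0.88 / Nt) * (fm + fm1) / (fm1 - fm) := by
    have h1 : 0.88 * fc / (Nt * fm) + 0.88 * fc / (Nt * fm1) =
        fc * (0.88 * (fm + fm1)) / (Nt * (fm * fm1)) := by
      field_simp
      ring
    rw [h1, div_le_div_iff₀ (by positivity) (by positivity),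
      show fc * (θp' + 2 * p) * (fm1 - fm) * (Nt * (fm * fm1)) =
        (fc * (fm * fm1)) * ((θp' + 2 * p) * (fm1 - fm) * Nt) from by ring,
      show fc * (0.88 * (fm + fm1)) * (fm * fm1) =
        (fc * (fm * fm1)) * (0.88 * (fm + fm1)) from by ring,
      mul_le_mul_iff_right₀ (by positivity),
      le_div_iff₀ hd, show (0.88 / Nt * (fm + fm1) : ℝ) = 0.88 * (fm + fm1) / Nt from by ring,
      le_div_iff₀ hNt]
  refine ⟨by rw [habs]; exact key, fun hBM => ?_⟩
  rw [habs, key, hBM, div_div_eq_mul_div]
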